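/- Let q : ℝⁿ → ℝᵐ be L-Lipschitz continuous with respect to the Euclidean norms (‖q(x₁) − q(x₂)‖ ≤ L‖x₁ − x₂‖ for all x₁, x₂), let C be a real m×n matrix, and let z : ℝⁿ × ℝⁿ → ℝⁿ be a map such that for every x, y ∈ ℝⁿ and every coordinate j, the j-th component z(x, y)_j equals either x_j or y_j. Define q_d(x, y) = q(z(x, y)) + C(x − y). Then for all x̲ ≤ x̄ in ℝⁿ, ‖q_d(x̄, x̲) − q_d(x̲, x̄)‖ ≤ (L + 2‖C‖) ‖x̄ − x̲‖, where ‖C‖ denotes the operator norm of C induced by the Euclidean norms. Moreover, if q̲, q̄ ∈ ℝᵐ satisfy q_d(x̲, x̄) ≤ q̲ ≤ q̄ ≤ q_d(x̄, x̲) componentwise, then ‖q̄ − q̲‖ ≤ ‖q_d(x̄, x̲) − q_d(x̲, x̄)‖ ≤ (L + 2‖C‖)‖x̄ − x̲‖. -/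

import Mathlib

open Matrix

/-- Entrywise positive part of a matrix: `(A⁺)ᵢⱼ = max (Aᵢⱼ) 0`. -/
def matPos {m n : Type*} (A : Matrix m n ℝ) : Matrix m n ℝ :=
  Matrix.of fun i j => max (A i j) 0

/-- Entrywise negative part of a matrix: `A⁻ = A⁺ - A`. -/
def matNeg {m n : Type*} (A : Matrix m n ℝ) : Matrix m n ℝ := matPos A - A

/-- Euclidean norm of a vector. -/
noncomputable def eucNorm {n : Type*} [Fintype n] (x : n → ℝ) : ℝ :=
  Real.sqrt (∑ i, x i ^ 2)

/-- Operator norm of a matrix induced by the Euclidean norms. -/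
noncomputable def eucOpNorm {m n : Type*} [Fintype m] [Fintype n] [DecidableEq n]
    (A : Matrix m n ℝ) : ℝ :=
  ‖LinearMap.toContinuousLinearMap (Matrix.toEuclideanLin A)‖

lemma eucNorm_eq {k : ℕ} (x : Fin k → ℝ) :
    eucNorm x = ‖(WithLp.equiv 2 (Fin k → ℝ)).symm x‖ := by
  rw [eucNorm, EuclideanSpace.norm_eq]
  congr 1
  refine Finset.sum_congr rfl fun i _ => ?_
  simp [Real.norm_eq_abs, sq_abs]

lemma eucNorm_nonneg {k : ℕ} (x : Fin k → ℝ) : 0 ≤ eucNorm x := Real.sqrt_nonneg _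

lemma eucNorm_eq_zero {k : ℕ} (x : Fin k → ℝ) (h : eucNorm x = 0) : x = 0 := by
  rw [eucNorm_eq] at h
  have := norm_eq_zero.mp h
  funext i
  exact congrFun (by simpa using congrArg (WithLp.equiv 2 (Fin k → ℝ)) this) i

lemma eucNorm_mono {k : ℕ} (x y : Fin k → ℝ) (h : ∀ i, |x i| ≤ |y i|) :
    eucNorm x ≤ eucNorm y := by
  apply Real.sqrt_le_sqrt
  refine Finset.sum_le_sum fun i _ => ?_
  calc x i ^ 2 = |x i| ^ 2 := (sq_abs _).symm
    _ ≤ |y i| ^ 2 := by apply pow_le_pow_left₀ (abs_nonneg _) (h i)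
    _ = y i ^ 2 := sq_abs _

lemma eucNorm_add_le {k : ℕ} (x y : Fin k → ℝ) :
    eucNorm (x + y) ≤ eucNorm x + eucNorm y := by
  rw [eucNorm_eq, eucNorm_eq, eucNorm_eq]
  exact norm_add_le _ _

lemma eucNorm_smul {k : ℕ} (c : ℝ) (x : Fin k → ℝ) :
    eucNorm (c • x) = |c| * eucNorm x := by
  rw [eucNorm_eq, eucNorm_eq]
  rw [show (WithLp.equiv 2 (Fin k → ℝ)).symm (c • x)
      = c • (WithLp.equiv 2 (Fin k → ℝ)).symm x from rfl]
  rw [norm_smul, Real.norm_eq_abs]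

lemma eucNorm_mulVec_le {l k : ℕ} (A : Matrix (Fin l) (Fin k) ℝ) (v : Fin k → ℝ) :
    eucNorm (A.mulVec v) ≤ eucOpNorm A * eucNorm v := by
  rw [eucNorm_eq, eucNorm_eq, eucOpNorm]
  have h : (WithLp.equiv 2 (Fin l → ℝ)).symm (A.mulVec v) =
      (LinearMap.toContinuousLinearMap (Matrix.toEuclideanLin A))
        ((WithLp.equiv 2 (Fin k → ℝ)).symm v) := by
    simp [Matrix.toEuclideanLin_apply]
  rw [h]
  exact (LinearMap.toContinuousLinearMap (Matrix.toEuclideanLin A)).le_opNorm _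

theorem decomposition_lipschitz_like {n m : ℕ} (L : ℝ)
    (q : (Fin n → ℝ) → (Fin m → ℝ))
    (hLip : ∀ x₁ x₂ : Fin n → ℝ, eucNorm (q x₁ - q x₂) ≤ L * eucNorm (x₁ - x₂))
    (C : Matrix (Fin m) (Fin n) ℝ)
    (z : (Fin n → ℝ) → (Fin n → ℝ) → (Fin n → ℝ))
    (hz : ∀ (x y : Fin n → ℝ) (j : Fin n), z x y j = x j ∨ z x y j = y j)
    (qd : (Fin n → ℝ) → (Fin n → ℝ) → (Fin m → ℝ))
    (hqd : ∀ x y : Fin n → ℝ, qd x y = q (z x y) + C.mulVec (x - y)) :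
    ∀ xl xu : Fin n → ℝ, xl ≤ xu →
      (eucNorm (qd xu xl - qd xl xu) ≤ (L + 2 * eucOpNorm C) * eucNorm (xu - xl)) ∧
      (∀ ql qu : Fin m → ℝ, qd xl xu ≤ ql → ql ≤ qu → qu ≤ qd xu xl →
        eucNorm (qu - ql) ≤ eucNorm (qd xu xl - qd xl xu) ∧
        eucNorm (qu - ql) ≤ (L + 2 * eucOpNorm C) * eucNorm (xu - xl)) := by
  intro xl xu hle
  have hmain : eucNorm (qd xu xl - qd xl xu) ≤ (L + 2 * eucOpNorm C) * eucNorm (xu - xl) := by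
    have hD : qd xu xl - qd xl xu =
        (q (z xu xl) - q (z xl xu)) + C.mulVec ((2 : ℝ) • (xu - xl)) := by
      rw [hqd, hqd]
      have : C.mulVec ((2 : ℝ) • (xu - xl)) =
          C.mulVec (xu - xl) - C.mulVec (xl - xu) := by
        have hv : (2:ℝ) • (xu - xl) = (xu - xl) - (xl - xu) := by
          funext j
          show (2:ℝ) • ((xu - xl) j) = (xu - xl) j - (xl - xu) j
          simp only [Pi.sub_apply, smul_eq_mul]
          ring
        rw [hv, Matrix.mulVec_sub]
      rw [this]
      funext i
      simp only [Pi.add_apply, Pi.sub_apply]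
      ring
    have hzdiff : eucNorm (z xu xl - z xl xu) ≤ eucNorm (xu - xl) := by
      apply eucNorm_mono
      intro j
      have h1 := hz xu xl j
      have h2 := hz xl xu j
      have hj := hle j
      simp only [Pi.sub_apply]
      rw [abs_of_nonneg (by linarith : (0:ℝ) ≤ xu j - xl j)]
      rcases h1 with h1 | h1 <;> rcases h2 with h2 | h2 <;> rw [h1, h2] <;>
        (rw [abs_le]; exact ⟨by linarith, by linarith⟩)
    by_cases hL : 0 ≤ L
    · calc eucNorm (qd xu xl - qd xl xu)
          ≤ eucNorm (q (z xu xl) - q (z xl xu)) + eucNorm (C.mulVec ((2:ℝ) • (xu - xl))) := by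
            rw [hD]; exact eucNorm_add_le _ _
        _ ≤ L * eucNorm (xu - xl) + 2 * eucOpNorm C * eucNorm (xu - xl) := by
            apply add_le_add
            · exact le_trans (hLip _ _) (mul_le_mul_of_nonneg_left hzdiff hL)
            · calc eucNorm (C.mulVec ((2:ℝ) • (xu - xl)))
                  ≤ eucOpNorm C * eucNorm ((2:ℝ) • (xu - xl)) := eucNorm_mulVec_le _ _
                _ = 2 * eucOpNorm C * eucNorm (xu - xl) := by
                    rw [eucNorm_smul]; rw [abs_of_nonneg (by norm_num : (0:ℝ) ≤ 2)]; ring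
        _ = (L + 2 * eucOpNorm C) * eucNorm (xu - xl) := by ring
    · -- L < 0 : then xu = xl, everything is zero
      have hxu : xu = xl := by
        by_contra hne
        have hwne : xu - xl ≠ 0 := sub_ne_zero.mpr hne
        have hwpos : 0 < eucNorm (xu - xl) := by
          rcases lt_or_eq_of_le (eucNorm_nonneg (xu - xl)) with h | h
          · exact h
          · exact absurd (eucNorm_eq_zero _ h.symm) hwne
        have := hLip xu xl
        have : (0:ℝ) ≤ L * eucNorm (xu - xl) := le_trans (eucNorm_nonneg _) this
        nlinarith
      subst hxu
      have hzz : z xu xu = z xu xu := rfl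
      have : qd xu xu - qd xu xu = 0 := sub_self _
      rw [this]
      have h0 : eucNorm (0 : Fin m → ℝ) = 0 := by
        simp [eucNorm]
      rw [h0]
      have : eucNorm (xu - xu) = 0 := by simp [eucNorm]
      rw [this, mul_zero]
  refine ⟨hmain, fun ql qu hlo hmid hhi => ?_⟩
  have hsand : eucNorm (qu - ql) ≤ eucNorm (qd xu xl - qd xl xu) := by
    apply eucNorm_mono
    intro i
    have h1 := hlo i
    have h2 := hmid i
    have h3 := hhi i
    simp only [Pi.sub_apply]
    rw [abs_of_nonneg (by linarith : (0:ℝ) ≤ qu i - ql i),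
        abs_of_nonneg (by linarith : (0:ℝ) ≤ qd xu xl i - qd xl xu i)]
    linarith
  exact ⟨hsand, le_trans hsand hmain⟩
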